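/- Let v : [0,∞) × [0,L] → ℝ³ be a smooth solution of ∂v/∂t = ν v_xx + r × v_xx + k(v × r) - kν r × (v × r) with Neumann boundary conditions v_x(0,t) = v_x(L,t) = 0, where ν ≥ 0, k > 0, r ∈ ℝ³ constant. Then V(t) = ½‖v(·,t) - r‖²_{L²} satisfies dV/dt = -ν‖v_x‖²_{L²} - kν‖(v - r) × r‖²_{L²} ≤ 0. -/

import Mathlib

open Matrix

private lemma cont_dot' {α : Type*} [TopologicalSpace α] {f g : α → Fin 3 → ℝ}
    (hf : Continuous f) (hg : Continuous g) : Continuous fun x => f x ⬝ᵥ g x := by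
  simp only [dotProduct, Fin.sum_univ_three]
  fun_prop

private lemma cont_cross' {α : Type*} [TopologicalSpace α] {f g : α → Fin 3 → ℝ}
    (hf : Continuous f) (hg : Continuous g) : Continuous fun x => f x ⨯₃ g x := by
  apply continuous_pi
  intro i
  fin_cases i <;> simp [crossProduct] <;> fun_prop

private lemma key_alg' (ν k : ℝ) (v r vx vxx : Fin 3 → ℝ) :
    (v - r) ⬝ᵥ (ν • vxx + r ⨯₃ vxx + k • (v ⨯₃ r) - (k * ν) • (r ⨯₃ (v ⨯₃ r)))
      = (vx ⬝ᵥ (ν • vx + r ⨯₃ vx) + (v - r) ⬝ᵥ (ν • vxx + r ⨯₃ vxx))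
        - (ν * (vx ⬝ᵥ vx) + (k * ν) * (((v - r) ⨯₃ r) ⬝ᵥ ((v - r) ⨯₃ r))) := by
  simp [crossProduct, dotProduct, Fin.sum_univ_three, Matrix.vecHead, Matrix.vecTail]
  ring

private lemma dot_hasDerivAt' {f g : ℝ → Fin 3 → ℝ} {f' g' : Fin 3 → ℝ} {x : ℝ}
    (hf : HasDerivAt f f' x) (hg : HasDerivAt g g' x) :
    HasDerivAt (fun y => f y ⬝ᵥ g y) (f' ⬝ᵥ g x + f x ⬝ᵥ g') x := by
  have hf' := hasDerivAt_pi.1 hf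
  have hg' := hasDerivAt_pi.1 hg
  simp only [dotProduct, Fin.sum_univ_three]
  convert (((hf' 0).fun_mul (hg' 0)).fun_add ((hf' 1).fun_mul (hg' 1))).fun_add ((hf' 2).fun_mul (hg' 2)) |>.congr_deriv ?_
  ring

private lemma cross_hasDerivAt' {r : Fin 3 → ℝ} {g : ℝ → Fin 3 → ℝ} {g' : Fin 3 → ℝ} {x : ℝ}
    (hg : HasDerivAt g g' x) : HasDerivAt (fun y => r ⨯₃ g y) (r ⨯₃ g') x := by
  rw [hasDerivAt_pi] at hg ⊢
  intro i
  fin_cases i <;> simp only [crossProduct, LinearMap.mk₂_apply, Matrix.cons_val_zero,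
      Matrix.cons_val_one, Matrix.head_cons, Matrix.cons_val_two, Matrix.tail_cons] <;>
    exact ((hg _).const_mul _).sub ((hg _).const_mul _)

private lemma dot_self_nonneg' (f : Fin 3 → ℝ) : 0 ≤ f ⬝ᵥ f := by
  simp only [dotProduct, Fin.sum_univ_three]
  nlinarith [mul_self_nonneg (f 0), mul_self_nonneg (f 1), mul_self_nonneg (f 2)]

/-- Lyapunov computation in Theorem 11 of the paper: for a smooth solution `v` of
`v_t = ν v_xx + r × v_xx + k(v × r) - kν r × (v × r)` with Neumann boundary
conditions, `V(t) = ½‖v(·,t) - r‖²_{L²}` satisfies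
`V'(t) = -ν‖v_x‖² - kν‖(v - r) × r‖² ≤ 0`. -/
theorem stmt14 (L ν k : ℝ) (hL : 0 < L) (hν : 0 ≤ ν) (hk : 0 < k)
    (r : Fin 3 → ℝ) (v vt vx vxx : ℝ → ℝ → Fin 3 → ℝ)
    (hvt : ∀ t x, HasDerivAt (fun s => v s x) (vt t x) t)
    (hvx : ∀ t x, HasDerivAt (fun y => v t y) (vx t x) x)
    (hvxx : ∀ t x, HasDerivAt (fun y => vx t y) (vxx t x) x)
    (hcont : Continuous fun p : ℝ × ℝ => (v p.1 p.2, vt p.1 p.2, vx p.1 p.2, vxx p.1 p.2))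
    (hpde : ∀ t x, vt t x =
      ν • vxx t x + r ⨯₃ vxx t x + k • (v t x ⨯₃ r) - (k * ν) • (r ⨯₃ (v t x ⨯₃ r)))
    (hbc : ∀ t, vx t 0 = 0 ∧ vx t L = 0) :
    ∀ t : ℝ,
      HasDerivAt (fun s => (1 / 2) * ∫ x in (0:ℝ)..L, (v s x - r) ⬝ᵥ (v s x - r))
        (-(ν * ∫ x in (0:ℝ)..L, vx t x ⬝ᵥ vx t x) -
          k * ν * ∫ x in (0:ℝ)..L, ((v t x - r) ⨯₃ r) ⬝ᵥ ((v t x - r) ⨯₃ r)) t ∧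
      -(ν * ∫ x in (0:ℝ)..L, vx t x ⬝ᵥ vx t x) -
          k * ν * ∫ x in (0:ℝ)..L, ((v t x - r) ⨯₃ r) ⬝ᵥ ((v t x - r) ⨯₃ r) ≤ 0 := by
  -- continuity facts
  have hv : Continuous fun p : ℝ × ℝ => v p.1 p.2 := hcont.fst
  have hvtc : Continuous fun p : ℝ × ℝ => vt p.1 p.2 := hcont.snd.fst
  have hvxc : Continuous fun p : ℝ × ℝ => vx p.1 p.2 := hcont.snd.snd.fst
  have hvxxc : Continuous fun p : ℝ × ℝ => vxx p.1 p.2 := hcont.snd.snd.snd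
  intro t
  -- continuity in the space variable at fixed time t
  have hvt' : Continuous fun x => v t x := hv.comp (Continuous.prodMk_right t)
  have hvtt : Continuous fun x => vt t x := hvtc.comp (Continuous.prodMk_right t)
  have hvxt : Continuous fun x => vx t x := hvxc.comp (Continuous.prodMk_right t)
  have hvxxt : Continuous fun x => vxx t x := hvxxc.comp (Continuous.prodMk_right t)
  set I1 : ℝ := ∫ x in (0:ℝ)..L, vx t x ⬝ᵥ vx t x with hI1
  set I2 : ℝ := ∫ x in (0:ℝ)..L, ((v t x - r) ⨯₃ r) ⬝ᵥ ((v t x - r) ⨯₃ r) with hI2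
  have hI1n : 0 ≤ I1 :=
    intervalIntegral.integral_nonneg hL.le (fun x _ => dot_self_nonneg' _)
  have hI2n : 0 ≤ I2 :=
    intervalIntegral.integral_nonneg hL.le (fun x _ => dot_self_nonneg' _)
  refine ⟨?_, ?_⟩
  swap
  · nlinarith [mul_nonneg hν hI1n, mul_nonneg (mul_nonneg hk.le hν) hI2n]
  -- Step 1: differentiate under the integral sign
  have hF'cont : Continuous fun p : ℝ × ℝ => 2 * ((v p.1 p.2 - r) ⬝ᵥ vt p.1 p.2) :=
    continuous_const.mul (cont_dot' (hv.sub continuous_const) hvtc)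
  obtain ⟨C, hC⟩ := (((isCompact_closedBall t 1).prod isCompact_uIcc)).exists_bound_of_continuousOn
    (hF'cont.continuousOn (s := Metric.closedBall t 1 ×ˢ Set.uIcc (0:ℝ) L))
  have hstep1 : HasDerivAt (fun s => ∫ x in (0:ℝ)..L, (v s x - r) ⬝ᵥ (v s x - r))
      (∫ x in (0:ℝ)..L, 2 * ((v t x - r) ⬝ᵥ vt t x)) t := by
    refine (intervalIntegral.hasDerivAt_integral_of_dominated_loc_of_deriv_le
      (F := fun s x => (v s x - r) ⬝ᵥ (v s x - r))
      (F' := fun s x => 2 * ((v s x - r) ⬝ᵥ vt s x))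
      (bound := fun _ => C) (Metric.ball_mem_nhds t one_pos) ?_ ?_ ?_ ?_ ?_ ?_).2
    · filter_upwards with s
      exact (cont_dot' ((hv.comp (Continuous.prodMk_right s)).sub continuous_const)
        ((hv.comp (Continuous.prodMk_right s)).sub continuous_const)).aestronglyMeasurable
    · exact (cont_dot' (hvt'.sub continuous_const) (hvt'.sub continuous_const)).intervalIntegrable 0 L
    · exact (continuous_const.mul (cont_dot' (hvt'.sub continuous_const) hvtt)).aestronglyMeasurable
    · filter_upwards with x hx s hs
      exact hC (s, x) ⟨Metric.ball_subset_closedBall hs,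
        Set.uIoc_subset_uIcc hx⟩
    · exact intervalIntegrable_const
    · filter_upwards with x hx s hs
      have := dot_hasDerivAt' ((hvt s x).sub_const r) ((hvt s x).sub_const r)
      refine this.congr_deriv ?_
      rw [dotProduct_comm]
      ring
  -- Step 2: identify the value of the derivative
  have hval : ∫ x in (0:ℝ)..L, 2 * ((v t x - r) ⬝ᵥ vt t x) = 2 * (-(ν * I1) - k * ν * I2) := by
    -- pointwise rewrite via the PDE and the algebraic identity
    have hpt : ∀ x, (v t x - r) ⬝ᵥ vt t x
        = (vx t x ⬝ᵥ (ν • vx t x + r ⨯₃ vx t x) + (v t x - r) ⬝ᵥ (ν • vxx t x + r ⨯₃ vxx t x))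
          - (ν * (vx t x ⬝ᵥ vx t x)
            + (k * ν) * (((v t x - r) ⨯₃ r) ⬝ᵥ ((v t x - r) ⨯₃ r))) := by
      intro x
      rw [hpde t x]
      exact key_alg' ν k (v t x) r (vx t x) (vxx t x)
    -- G and its derivative
    have hG : ∀ x, HasDerivAt (fun y => (v t y - r) ⬝ᵥ (ν • vx t y + r ⨯₃ vx t y))
        (vx t x ⬝ᵥ (ν • vx t x + r ⨯₃ vx t x) + (v t x - r) ⬝ᵥ (ν • vxx t x + r ⨯₃ vxx t x)) x :=
      fun x => dot_hasDerivAt' ((hvx t x).sub_const r)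
        (((hvxx t x).const_smul ν).add (cross_hasDerivAt' (hvxx t x)))
    have hDcont : Continuous fun x =>
        vx t x ⬝ᵥ (ν • vx t x + r ⨯₃ vx t x) + (v t x - r) ⬝ᵥ (ν • vxx t x + r ⨯₃ vxx t x) := by
      refine Continuous.add (cont_dot' hvxt ?_) (cont_dot' (hvt'.sub continuous_const) ?_)
      · exact (hvxt.const_smul ν).add (cont_cross' continuous_const hvxt)
      · exact (hvxxt.const_smul ν).add (cont_cross' continuous_const hvxxt)
    have hGint : ∫ x in (0:ℝ)..L,
        (vx t x ⬝ᵥ (ν • vx t x + r ⨯₃ vx t x) + (v t x - r) ⬝ᵥ (ν • vxx t x + r ⨯₃ vxx t x)) = 0 := by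
      rw [intervalIntegral.integral_eq_sub_of_hasDerivAt (fun x _ => hG x)
        (hDcont.intervalIntegrable 0 L)]
      simp [(hbc t).1, (hbc t).2]
    have hScont : Continuous fun x =>
        ν * (vx t x ⬝ᵥ vx t x) + (k * ν) * (((v t x - r) ⨯₃ r) ⬝ᵥ ((v t x - r) ⨯₃ r)) := by
      refine Continuous.add (continuous_const.mul (cont_dot' hvxt hvxt))
        (continuous_const.mul (cont_dot' ?_ ?_)) <;>
        exact cont_cross' (hvt'.sub continuous_const) continuous_const
    have h1 : ∫ x in (0:ℝ)..L, (v t x - r) ⬝ᵥ vt t x = -(ν * I1) - k * ν * I2 := by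
      rw [intervalIntegral.integral_congr (g := fun x =>
        (vx t x ⬝ᵥ (ν • vx t x + r ⨯₃ vx t x) + (v t x - r) ⬝ᵥ (ν • vxx t x + r ⨯₃ vxx t x))
          - (ν * (vx t x ⬝ᵥ vx t x)
            + (k * ν) * (((v t x - r) ⨯₃ r) ⬝ᵥ ((v t x - r) ⨯₃ r)))) (fun x _ => hpt x)]
      rw [intervalIntegral.integral_sub (hDcont.intervalIntegrable 0 L)
        (hScont.intervalIntegrable 0 L), hGint]
      rw [intervalIntegral.integral_add (f := fun x => ν * (vx t x ⬝ᵥ vx t x))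
        (g := fun x => (k * ν) * (((v t x - r) ⨯₃ r) ⬝ᵥ ((v t x - r) ⨯₃ r)))
        ((continuous_const.fun_mul (cont_dot' hvxt hvxt)).intervalIntegrable 0 L)
        ((continuous_const.fun_mul (cont_dot' (cont_cross' (hvt'.sub continuous_const) continuous_const)
          (cont_cross' (hvt'.sub continuous_const) continuous_const))).intervalIntegrable 0 L)]
      rw [intervalIntegral.integral_const_mul, intervalIntegral.integral_const_mul]
      rw [← hI1, ← hI2]
      ring
    calc ∫ x in (0:ℝ)..L, 2 * ((v t x - r) ⬝ᵥ vt t x)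
        = 2 * ∫ x in (0:ℝ)..L, (v t x - r) ⬝ᵥ vt t x :=
          intervalIntegral.integral_const_mul 2 _
      _ = 2 * (-(ν * I1) - k * ν * I2) := by rw [h1]
  have := hstep1.const_mul (1 / 2 : ℝ)
  rw [hval] at this
  refine this.congr_deriv ?_
  ring
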